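/- Let φ, F be twice differentiable on an interval, with F' > 0, and fix s and l* with 0 < l* and s − l* in the interval. Then the limit as ε ↓ 0 of [ε H G / (1 − (φ'(s)/φ'(s+ε)) e^{−εH})], where H = F'(s)/(F(s) − F(s−l*)) and G is a constant, equals G·F'(s)φ'(s)/(φ''(s)(F(s)−F(s−l*)) + F'(s)φ'(s)), provided the denominator expression φ''(s)(F(s)−F(s−l*)) + F'(s)φ'(s) ≠ 0. -/

import Mathlib

theorem stmt_10 (φ F : ℝ → ℝ) (s lstar G : ℝ) (hl : 0 < lstar)
    (hφ : ContDiffAt ℝ 2 φ s) (hF : DifferentiableAt ℝ F s)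
    (hF' : 0 < deriv F s) (hFdiff : F s - F (s - lstar) ≠ 0)
    (H : ℝ) (hH : H = deriv F s / (F s - F (s - lstar)))
    (hden : deriv (deriv φ) s * (F s - F (s - lstar)) + deriv F s * deriv φ s ≠ 0) :
    Filter.Tendsto
      (fun ε : ℝ => ε * H * G / (1 - (deriv φ s / deriv φ (s + ε)) * Real.exp (-(ε * H))))
      (nhdsWithin 0 (Set.Ioi 0))
      (nhds (G * (deriv F s * deriv φ s) /
        (deriv (deriv φ) s * (F s - F (s - lstar)) + deriv F s * deriv φ s))) := by
  set D := F s - F (s - lstar) with hD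
  -- differentiability of deriv φ at s
  have hφ' : ContDiffAt ℝ 1 (deriv φ) s := by
    have h1 : ContDiffAt ℝ 1 (fderiv ℝ φ) s := hφ.fderiv_right (by norm_num)
    have h2 : ContDiffAt ℝ 1 (fun x => fderiv ℝ φ x 1) s := h1.clm_apply contDiffAt_const
    have h3 : deriv φ = fun x => fderiv ℝ φ x 1 := rfl
    rw [h3]
    exact h2
  have hdφ : DifferentiableAt ℝ (deriv φ) s := hφ'.differentiableAt one_ne_zero
  by_cases h0 : deriv φ s = 0
  · -- degenerate case: numerator of the ratio vanishes
    have heq : (fun ε : ℝ => ε * H * G / (1 - (deriv φ s / deriv φ (s + ε)) * Real.exp (-(ε * H))))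
        = fun ε : ℝ => ε * H * G := by
      funext ε; simp [h0]
    rw [heq, h0]
    have h2 : Filter.Tendsto (fun ε : ℝ => ε * H * G) (nhdsWithin 0 (Set.Ioi 0))
        (nhds (0 * H * G)) :=
      Filter.Tendsto.mul (Filter.Tendsto.mul
        ((continuous_id.tendsto (0 : ℝ)).mono_left nhdsWithin_le_nhds) tendsto_const_nhds)
        tendsto_const_nhds
    simpa using h2
  · -- main case
    set g : ℝ → ℝ := fun ε => 1 - (deriv φ s / deriv φ (s + ε)) * Real.exp (-(ε * H)) with hg
    have hinner : HasDerivAt (fun ε : ℝ => deriv φ (s + ε)) (deriv (deriv φ) s) 0 := by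
      have haff : HasDerivAt (fun ε : ℝ => s + ε) 1 0 := by
        simpa using (hasDerivAt_id (0 : ℝ)).const_add s
      have h' : HasDerivAt (deriv φ) (deriv (deriv φ) s) (s + 0) := by
        simpa using hdφ.hasDerivAt
      have h := h'.comp 0 haff
      exact h.congr_deriv (mul_one _)
    have hgd : HasDerivAt g (deriv (deriv φ) s / deriv φ s + H) 0 := by
      have hquot : HasDerivAt (fun ε : ℝ => deriv φ s / deriv φ (s + ε))
          ((0 * deriv φ (s + 0) - deriv φ s * deriv (deriv φ) s) / (deriv φ (s + 0)) ^ 2) 0 :=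
        (hasDerivAt_const 0 (deriv φ s)).div hinner (by simpa using h0)
      have hexp : HasDerivAt (fun ε : ℝ => Real.exp (-(ε * H)))
          (Real.exp (-(0 * H)) * (-H)) 0 := by
        have h1 : HasDerivAt (fun ε : ℝ => -(ε * H)) (-H) 0 := by
          exact (((hasDerivAt_id (0 : ℝ)).mul_const H).neg).congr_deriv (by simp)
        exact (Real.hasDerivAt_exp (-(0 * H))).comp 0 h1
      have h := ((hasDerivAt_const (0 : ℝ) (1 : ℝ)).sub (hquot.mul hexp))
      refine h.congr_deriv ?_
      have : deriv φ (s + 0) = deriv φ s := by norm_num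
      rw [this]
      simp only [zero_mul, neg_zero, Real.exp_zero]
      field_simp
      ring
    have hslope : Filter.Tendsto (fun ε : ℝ => g ε / ε) (nhdsWithin 0 (Set.Ioi 0))
        (nhds (deriv (deriv φ) s / deriv φ s + H)) := by
      have h1 := hasDerivAt_iff_tendsto_slope.mp hgd
      have h2 : Filter.Tendsto (slope g 0) (nhdsWithin 0 (Set.Ioi 0))
          (nhds (deriv (deriv φ) s / deriv φ s + H)) :=
        h1.mono_left (nhdsWithin_mono 0 (fun x hx => ne_of_gt hx))
      have hg0 : g 0 = 0 := by simp [hg, h0]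
      refine h2.congr (fun x => ?_)
      simp [slope, hg0, div_eq_inv_mul]
    have hLne : deriv (deriv φ) s / deriv φ s + H ≠ 0 := by
      rw [hH]
      intro hcontra
      apply hden
      have h1 : (deriv (deriv φ) s / deriv φ s + deriv F s / D) * (deriv φ s * D) = 0 := by
        rw [hcontra]; ring
      field_simp at h1
      linarith [h1]
    have hmain : Filter.Tendsto (fun ε : ℝ => H * G / (g ε / ε)) (nhdsWithin 0 (Set.Ioi 0))
        (nhds (H * G / (deriv (deriv φ) s / deriv φ s + H))) :=
      Filter.Tendsto.div tendsto_const_nhds hslope hLne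
    have hval : H * G / (deriv (deriv φ) s / deriv φ s + H)
        = G * (deriv F s * deriv φ s) / (deriv (deriv φ) s * D + deriv F s * deriv φ s) := by
      rw [hH]
      have key : deriv (deriv φ) s / deriv φ s + deriv F s / D
          = (deriv (deriv φ) s * D + deriv F s * deriv φ s) / (deriv φ s * D) := by
        field_simp
      rw [key, div_div_eq_mul_div]
      congr 1
      field_simp
    rw [← hval]
    refine hmain.congr' ?_
    filter_upwards [self_mem_nhdsWithin] with ε (hε : ε ∈ Set.Ioi (0 : ℝ))
    have hεne : ε ≠ 0 := ne_of_gt hε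
    show H * G / (g ε / ε) = ε * H * G / g ε
    rw [div_div_eq_mul_div]
    ring
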